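/- Let d ≥ 1, 1 < p ≤ ∞, and let q satisfy max{((d+2)/d)·p', 2(d+1)/d} < q ≤ ∞; assume the extension conjecture holds on a neighborhood of (p, q). Let (f_n) be a bounded sequence in L^p(S^d, σ), and for M > 0 set E_n^M := {ω ∈ S^d : |f_n(ω)| > M}. Then lim_{M→∞} sup_n sup { ‖E (f_n χ_E)‖_{L^q(ℝ^{d+1})} : E ⊆ E_n^M measurable } = 0. -/

import Mathlib

open MeasureTheory Filter Topology
open scoped ENNReal NNReal

noncomputable section

abbrev ES (n : ℕ) : Type := EuclideanSpace ℝ (Fin n)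

/-- surface measure on the unit sphere `S^d ⊂ ℝ^{d+1}`:
`d`-dimensional Hausdorff measure restricted to the sphere -/
def sphM (d : ℕ) : Measure (ES (d + 1)) :=
  (μH[(d : ℝ)]).restrict (Metric.sphere (0 : ES (d + 1)) 1)

/-- the spherical extension (adjoint restriction) operator -/
def sphExt (d : ℕ) (f : ES (d + 1) → ℂ) (x : ES (d + 1)) : ℂ :=
  ∫ ω, Complex.exp (Complex.I * ((inner ℝ x ω : ℝ) : ℂ)) * f ω ∂(sphM d)

/-- the operator norm `S_{p→q}` of the spherical extension operator -/
def Spq (d : ℕ) (p q : ℝ≥0∞) : ℝ≥0∞ :=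
  sSup {c : ℝ≥0∞ | ∃ f : ES (d + 1) → ℂ, MemLp f p (sphM d) ∧ Integrable f (sphM d) ∧
    eLpNorm f p (sphM d) ≠ 0 ∧ c = eLpNorm (sphExt d f) q volume / eLpNorm f p (sphM d)}

/-- dual (conjugate) exponent in `ℝ≥0∞` -/
def dualE (p : ℝ≥0∞) : ℝ≥0∞ := (1 - 1 / p)⁻¹

/-- the extension conjecture holds at the exponent pair `(r, s)` -/
def ExtConjAt (d : ℕ) (r s : ℝ≥0∞) : Prop :=
  Spq d r s < ⊤ ∨ s ≤ 2 * ((d : ℝ≥0∞) + 1) / d ∨ s < ((d : ℝ≥0∞) + 2) / d * dualE r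

/-- the extension conjecture holds on a neighborhood of `(p, q)` -/
def ExtConjNear (d : ℕ) (p q : ℝ≥0∞) : Prop :=
  ∃ ε > (0 : ℝ), ∀ r s : ℝ≥0∞, 1 ≤ r → 1 ≤ s →
    |(1 / r).toReal - (1 / p).toReal| < ε → |(1 / s).toReal - (1 / q).toReal| < ε →
    ExtConjAt d r s

/-- the point `(a, v) ∈ ℝ^{1+d}` -/
def buildPt (d : ℕ) (a : ℝ) (v : ES d) : ES (d + 1) := WithLp.toLp 2 (Fin.cons a (fun j => v j))

/-- `ω' ∈ ℝ^d`, the last `d` coordinates of `ω ∈ ℝ^{1+d}` -/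
def primePart (d : ℕ) (ω : ES (d + 1)) : ES d := WithLp.toLp 2 (fun i : Fin d => ω i.succ)

/-- flip the sign of the first coordinate -/
def negFirst (d : ℕ) (x : ES (d + 1)) : ES (d + 1) := buildPt d (-(x 0)) (primePart d x)

/-- distance in projective space: `dist([ω],[ω'])` -/
def pdist (d : ℕ) (ω ω' : ES (d + 1)) : ℝ := min ‖ω - ω'‖ ‖ω + ω'‖

/-- the first standard basis vector -/
def e1 (d : ℕ) : ES (d + 1) := EuclideanSpace.single 0 1

/-- the parabolic extension operator (defined by the integral formula, for integrable `φ`) -/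
def parabExt (d : ℕ) (φ : ES d → ℂ) (x : ES (d + 1)) : ℂ :=
  ∫ ξ, Complex.exp (Complex.I *
    ((x 0 * (‖ξ‖ ^ 2 / 2) + ∑ i, primePart d x i * ξ i : ℝ) : ℂ)) * φ ξ

/-- the operator norm `P_{p→q}` of the parabolic extension operator -/
def Ppq (d : ℕ) (p q : ℝ≥0∞) : ℝ≥0∞ :=
  sSup {c : ℝ≥0∞ | ∃ φ : ES d → ℂ, MemLp φ p volume ∧ Integrable φ volume ∧
    eLpNorm φ p volume ≠ 0 ∧ c = eLpNorm (parabExt d φ) q volume / eLpNorm φ p volume}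

/-- `F` is the value at `φ ∈ L^p` of the continuous `L^p → L^q` extension of
the parabolic extension operator -/
def HasParabExt (d : ℕ) (p q : ℝ≥0∞) (φ : ES d → ℂ) (F : ES (d + 1) → ℂ) : Prop :=
  ∃ φk : ℕ → ES d → ℂ,
    (∀ k, MemLp (φk k) p volume ∧ Integrable (φk k) volume) ∧
    Tendsto (fun k => eLpNorm (φk k - φ) p volume) atTop (𝓝 0) ∧
    Tendsto (fun k => eLpNorm (parabExt d (φk k) - F) q volume) atTop (𝓝 0)

/-- the function maximized in the definition of `α_{p,q}` -/
def alphaFn (p q t : ℝ) : ℝ :=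
  ((1 / (2 * Real.pi)) * ∫ θ in (0 : ℝ)..(2 * Real.pi),
      ‖1 + (t : ℂ) * Complex.exp ((θ : ℂ) * Complex.I)‖ ^ q) ^ (1 / q) /
    (1 + t ^ p) ^ (1 / p)

/-- the constant `α_{p,q}` -/
def alphaC (p q : ℝ) : ℝ := sSup (alphaFn p q '' Set.Icc 0 1)

/-- the constant `β_{p,q}` -/
def betaC (p q : ℝ) : ℝ :=
  2 ^ (1 / (max p 2 / (max p 2 - 1))) *
    (Real.Gamma ((q + 1) / 2) / (Real.sqrt Real.pi * Real.Gamma ((q + 2) / 2))) ^ (1 / q)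

/-- weak convergence in `L^p`: tested against all `g ∈ L^{p'}` -/
def WeakLp {α : Type*} [MeasurableSpace α] (μ : Measure α) (p : ℝ≥0∞)
    (h : ℕ → α → ℂ) (h₀ : α → ℂ) : Prop :=
  ∀ g : α → ℂ, MemLp g (dualE p) μ →
    Tendsto (fun n => ∫ a, h n a * g a ∂μ) atTop (𝓝 (∫ a, h₀ a * g a ∂μ))

/-- modulation `e^{-i⟨x,ω⟩} f(ω)` -/
def modNeg (d : ℕ) (x : ES (d + 1)) (f : ES (d + 1) → ℂ) : ES (d + 1) → ℂ :=
  fun ω => Complex.exp (-(Complex.I * ((inner ℝ x ω : ℝ) : ℂ))) * f ω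

/-- modulation `e^{i⟨x,ω⟩} f(ω)` -/
def modPos (d : ℕ) (x : ES (d + 1)) (f : ES (d + 1) → ℂ) : ES (d + 1) → ℂ :=
  fun ω => Complex.exp (Complex.I * ((inner ℝ x ω : ℝ) : ℂ)) * f ω

/-- the concentrating profile `λ^{-d/p}(φ⁺(ω'/λ)χ_{ω₁>1/2} + φ⁻(ω'/λ)χ_{-ω₁>1/2})` -/
def profileHalf (d : ℕ) (p lam : ℝ) (φp φm : ES d → ℂ) : ES (d + 1) → ℂ :=
  fun ω => ((lam ^ (-(d : ℝ) / p) : ℝ) : ℂ) *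
    ((if (1 / 2 : ℝ) < ω 0 then φp (lam⁻¹ • primePart d ω) else 0) +
     (if (1 / 2 : ℝ) < -(ω 0) then φm (lam⁻¹ • primePart d ω) else 0))

/-- the concentrating profile
`λ^{-d/p}(φ⁺(ω'/λ)χ_{ω₁>0} + φ⁻(ω'/λ)χ_{ω₁<0})χ_{|ω'|<1/2}` -/
def profileZero (d : ℕ) (p lam : ℝ) (φp φm : ES d → ℂ) : ES (d + 1) → ℂ :=
  fun ω => ((lam ^ (-(d : ℝ) / p) : ℝ) : ℂ) *
    ((if (0 : ℝ) < ω 0 then φp (lam⁻¹ • primePart d ω) else 0) +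
     (if ω 0 < (0 : ℝ) then φm (lam⁻¹ • primePart d ω) else 0)) *
    (if ‖primePart d ω‖ < 1 / 2 then 1 else 0)

/-- the rescaled and modulated restriction of `f` to the upper (`s = 1`) or lower
(`s = -1`) hemisphere, in parabolic coordinates:
`ξ ↦ λ^{d/p} e^{-i⟨x, (s√(1-|λξ|²), λξ)⟩} f(s√(1-|λξ|²), λξ) χ_{|ξ|<1/(2λ)}` -/
def chartFn (d : ℕ) (p s lam : ℝ) (x : ES (d + 1)) (f : ES (d + 1) → ℂ) : ES d → ℂ :=
  fun ξ =>
    if ‖ξ‖ < 1 / (2 * lam) then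
      ((lam ^ ((d : ℝ) / p) : ℝ) : ℂ) *
        Complex.exp (-(Complex.I *
          ((inner ℝ x (buildPt d (s * Real.sqrt (1 - ‖lam • ξ‖ ^ 2)) (lam • ξ)) : ℝ) : ℂ))) *
        f (buildPt d (s * Real.sqrt (1 - ‖lam • ξ‖ ^ 2)) (lam • ξ))
    else 0



/-- auxiliary: the spherical extension of an a.e. zero function vanishes -/
lemma sphExt_of_ae_zero {d : ℕ} {g : ES (d + 1) → ℂ} (hg : g =ᵐ[sphM d] 0) :
    sphExt d g = fun _ => 0 := by
  funext x
  unfold sphExt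
  rw [show (0 : ℂ) = ∫ _, (0 : ℂ) ∂(sphM d) by simp]
  refine integral_congr_ae ?_
  filter_upwards [hg] with ω hω
  simp [hω]

/-- auxiliary: operator norm bound for admissible functions -/
lemma extBound {d : ℕ} {r q : ℝ≥0∞} (hr0 : r ≠ 0) {g : ES (d + 1) → ℂ}
    (hg : MemLp g r (sphM d)) (hgi : Integrable g (sphM d)) :
    eLpNorm (sphExt d g) q volume ≤ Spq d r q * eLpNorm g r (sphM d) := by
  by_cases h0 : eLpNorm g r (sphM d) = 0
  · have hz : g =ᵐ[sphM d] 0 := (eLpNorm_eq_zero_iff hg.1 hr0).1 h0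
    rw [sphExt_of_ae_zero hz]
    simpa using (zero_le : (0 : ℝ≥0∞) ≤ Spq d r q * eLpNorm g r (sphM d))
  · have hmem : eLpNorm (sphExt d g) q volume / eLpNorm g r (sphM d) ∈
        {c : ℝ≥0∞ | ∃ f : ES (d + 1) → ℂ, MemLp f r (sphM d) ∧ Integrable f (sphM d) ∧
          eLpNorm f r (sphM d) ≠ 0 ∧
          c = eLpNorm (sphExt d f) q volume / eLpNorm f r (sphM d)} :=
      ⟨g, hg, hgi, h0, rfl⟩
    have hle : eLpNorm (sphExt d g) q volume / eLpNorm g r (sphM d) ≤ Spq d r q :=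
      le_sSup hmem
    rwa [ENNReal.div_le_iff h0 hg.2.ne] at hle

/-- Subcritical regime: extensions of pieces supported where `|f_n| > M`
are uniformly small as `M → ∞`. -/
theorem subcritical_large_values_negligible
    (d : ℕ) (hd : 1 ≤ d) (p q : ℝ≥0∞) (hp : 1 < p)
    (hq1 : ((d : ℝ≥0∞) + 2) / d * dualE p < q)
    (hq2 : 2 * ((d : ℝ≥0∞) + 1) / d < q)
    (hconj : ExtConjNear d p q)
    (f : ℕ → ES (d + 1) → ℂ)
    (hfmem : ∀ n, MemLp (f n) p (sphM d))
    (hfbd : ∃ C : ℝ≥0∞, C < ⊤ ∧ ∀ n, eLpNorm (f n) p (sphM d) ≤ C) :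
    Tendsto (fun M : ℝ =>
      ⨆ n, ⨆ (E : Set (ES (d + 1)))
        (_ : MeasurableSet E ∧ E ⊆ {ω | M < ‖f n ω‖}),
        eLpNorm (sphExt d (E.indicator (f n))) q volume) atTop (𝓝 0) := by
  classical
  obtain ⟨C, hCt, hCb⟩ := hfbd
  by_cases hptop : p = ⊤
  · -- `p = ∞`: for large `M` the sets `E` are null and everything vanishes
    subst hptop
    refine tendsto_of_tendsto_of_tendsto_of_le_of_le' tendsto_const_nhds tendsto_const_nhds
      (Eventually.of_forall fun _ => zero_le) ?_
    filter_upwards [eventually_ge_atTop (C.toReal + 1)] with M hM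
    refine iSup_le fun n => iSup_le fun E => iSup_le fun hE => ?_
    obtain ⟨hEm, hEs⟩ := hE
    -- a.e. bound on `f n`
    have hae : ∀ᵐ ω ∂(sphM d), (‖f n ω‖₊ : ℝ≥0∞) ≤ C := by
      filter_upwards [ae_le_eLpNormEssSup (f := f n) (μ := sphM d)] with ω hω
      exact hω.trans (by simpa [eLpNorm_exponent_top] using hCb n)
    have hnull : sphM d {ω | M < ‖f n ω‖} = 0 := by
      refine measure_mono_null (fun ω hω => ?_) (ae_iff.mp hae)
      simp only [Set.mem_setOf_eq] at hω ⊢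
      intro hle
      have h1 : ‖f n ω‖ ≤ C.toReal := by
        have := ENNReal.toReal_mono hCt.ne hle
        simpa using this
      have h2 : M < ‖f n ω‖ := hω
      linarith
    have hz : E.indicator (f n) =ᵐ[sphM d] 0 := by
      have hEnull : sphM d E = 0 := measure_mono_null hEs hnull
      have : ∀ᵐ ω ∂(sphM d), ω ∉ E := measure_eq_zero_iff_ae_notMem.mp hEnull
      filter_upwards [this] with ω hω
      simp [Set.indicator_of_notMem hω]
    rw [sphExt_of_ae_zero hz]
    simp
  · -- main case: `p < ∞`
    have hp0 : p ≠ 0 := (zero_lt_one.trans hp).ne'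
    set pR : ℝ := p.toReal with hpRdef
    have hpR1 : 1 < pR := by
      rw [show (1 : ℝ) = (1 : ℝ≥0∞).toReal by simp]
      exact (ENNReal.toReal_lt_toReal (by simp) hptop).2 hp
    have hpR0 : 0 < pR := by linarith
    set a : ℝ := (1 / p).toReal with hadef
    have ha_eq : a = pR⁻¹ := by simp [hadef, one_div, ENNReal.toReal_inv, hpRdef]
    have ha0 : 0 < a := by rw [ha_eq]; positivity
    have ha1 : a < 1 := by
      rw [ha_eq]
      exact inv_lt_one_of_one_lt₀ hpR1
    have h1p : 1 / p = ENNReal.ofReal a := by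
      rw [hadef, ENNReal.ofReal_toReal]
      simp [hp0]
    set K : ℝ := ((d : ℝ) + 2) / d with hKdef
    have hd0 : (0 : ℝ) < d := by exact_mod_cast hd
    have hK0 : 0 < K := by positivity
    have hKE : ((d : ℝ≥0∞) + 2) / d = ENNReal.ofReal K := by
      rw [hKdef, ENNReal.ofReal_div_of_pos hd0]
      congr 1
      · rw [ENNReal.ofReal_add (by positivity) (by norm_num)]
        simp
      · simp
    have hdualp : dualE p = ENNReal.ofReal ((1 - a)⁻¹) := by
      rw [dualE, h1p, ← ENNReal.ofReal_one, ← ENNReal.ofReal_sub _ ha0.le,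
        ENNReal.ofReal_inv_of_pos (by linarith)]
    obtain ⟨ε, hε, hc⟩ := hconj
    -- choose the auxiliary exponent t = 1/r
    obtain ⟨t, hta, ht1, htε, htq⟩ : ∃ t : ℝ, a < t ∧ t < 1 ∧ t - a < ε ∧
        ENNReal.ofReal (K * (1 - t)⁻¹) ≤ q := by
      by_cases hqt : q = ⊤
      · refine ⟨min (a + ε / 2) ((a + 1) / 2), ?_, ?_, ?_, hqt ▸ le_top⟩
        · exact lt_min (by linarith) (by linarith)
        · exact (min_le_right _ _).trans_lt (by linarith)
        · have := min_le_left (a + ε / 2) ((a + 1) / 2); linarith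
      · have h1a : (0 : ℝ) < 1 - a := by linarith
        have hq1R : K * (1 - a)⁻¹ < q.toReal := by
          rw [hKE, hdualp, ← ENNReal.ofReal_mul hK0.le] at hq1
          exact (ENNReal.ofReal_lt_iff_lt_toReal
            (mul_nonneg hK0.le (inv_nonneg.2 h1a.le)) hqt).1 hq1
        have hqR0 : 0 < q.toReal := (mul_pos hK0 (inv_pos.2 h1a)).trans hq1R
        have hq1R' : K < q.toReal * (1 - a) := by
          rw [← div_eq_mul_inv, div_lt_iff₀ h1a] at hq1R
          exact hq1R
        have hKq : K / q.toReal < 1 - a := by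
          rw [div_lt_iff₀ hqR0]; nlinarith
        have hKq0 : 0 < K / q.toReal := by positivity
        refine ⟨min (a + ε / 2) (1 - K / q.toReal), ?_, ?_, ?_, ?_⟩
        · exact lt_min (by linarith) (by linarith)
        · exact (min_le_right _ _).trans_lt (by linarith)
        · have := min_le_left (a + ε / 2) (1 - K / q.toReal); linarith
        · have h1t : K / q.toReal ≤ 1 - min (a + ε / 2) (1 - K / q.toReal) := by
            have := min_le_right (a + ε / 2) (1 - K / q.toReal); linarith
          have hKdiv : K / q.toReal * q.toReal = K := div_mul_cancel₀ _ hqR0.ne'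
          have hmul := mul_le_mul_of_nonneg_right h1t hqR0.le
          have : K * (1 - min (a + ε / 2) (1 - K / q.toReal))⁻¹ ≤ q.toReal := by
            rw [← div_eq_mul_inv, div_le_iff₀ (by linarith)]
            nlinarith
          calc ENNReal.ofReal (K * (1 - min (a + ε / 2) (1 - K / q.toReal))⁻¹)
              ≤ ENNReal.ofReal q.toReal := ENNReal.ofReal_le_ofReal this
            _ = q := ENNReal.ofReal_toReal hqt
    have ht0 : 0 < t := ha0.trans hta
    set r : ℝ≥0∞ := (ENNReal.ofReal t)⁻¹ with hrdef
    have hr_inv : 1 / r = ENNReal.ofReal t := by simp [hrdef, one_div]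
    have hrofReal : r = ENNReal.ofReal t⁻¹ := by
      rw [hrdef, ENNReal.ofReal_inv_of_pos ht0]
    have hr0 : r ≠ 0 := by
      simp [hrdef]
    have hrtop : r ≠ ⊤ := by
      rw [hrofReal]; exact ENNReal.ofReal_ne_top
    have hr1 : 1 ≤ r := by
      rw [hrdef, ENNReal.one_le_inv]
      calc ENNReal.ofReal t ≤ ENNReal.ofReal 1 := ENNReal.ofReal_le_ofReal ht1.le
        _ = 1 := ENNReal.ofReal_one
    set rR : ℝ := r.toReal with hrRdef
    have hrR_eq : rR = t⁻¹ := by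
      simp [hrRdef, hrdef, ENNReal.toReal_inv, ENNReal.toReal_ofReal ht0.le]
    have hrR0 : 0 < rR := by rw [hrR_eq]; positivity
    have hrRpR : rR < pR := by
      rw [hrR_eq, show pR = a⁻¹ by rw [ha_eq, inv_inv]]
      exact inv_strictAnti₀ ha0 hta
    -- the extension conjecture at (r, q) gives a finite operator norm
    have hq_one : (1 : ℝ≥0∞) ≤ q := by
      refine le_of_lt (lt_of_le_of_lt ?_ hq2)
      calc (1 : ℝ≥0∞) = d / d :=
            (ENNReal.div_self (Nat.cast_ne_zero.2 (by omega)) (by simp)).symm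
        _ ≤ 2 * ((d : ℝ≥0∞) + 1) / d := by
            apply ENNReal.div_le_div_right
            calc (d : ℝ≥0∞) ≤ (d : ℝ≥0∞) + 1 := le_self_add
              _ ≤ 2 * ((d : ℝ≥0∞) + 1) := le_mul_of_one_le_left zero_le one_le_two
    have hdualr : dualE r = ENNReal.ofReal ((1 - t)⁻¹) := by
      rw [dualE, hr_inv, ← ENNReal.ofReal_one, ← ENNReal.ofReal_sub _ ht0.le,
        ENNReal.ofReal_inv_of_pos (by linarith)]
    have hat : ExtConjAt d r q := by
      refine hc r q hr1 hq_one ?_ ?_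
      · rw [hr_inv, ENNReal.toReal_ofReal ht0.le, ← hadef, abs_of_pos (by linarith)]
        exact htε
      · simpa using hε
    have hS : Spq d r q < ⊤ := by
      rcases hat with h | h | h
      · exact h
      · exact absurd h (not_le.mpr hq2)
      · refine absurd h (not_lt.mpr ?_)
        rw [hKE, hdualr, ← ENNReal.ofReal_mul hK0.le]
        exact htq
    -- uniform smallness of the L^r norms of the truncated pieces
    have hIf : ∀ n, ∫⁻ ω, (‖f n ω‖₊ : ℝ≥0∞) ^ pR ∂(sphM d) ≤ C ^ pR := by
      intro n
      have h1 := hCb n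
      rw [eLpNorm_eq_lintegral_rpow_enorm_toReal hp0 hptop] at h1
      calc ∫⁻ ω, (‖f n ω‖₊ : ℝ≥0∞) ^ pR ∂(sphM d)
          = ((∫⁻ ω, (‖f n ω‖₊ : ℝ≥0∞) ^ pR ∂(sphM d)) ^ (1 / pR)) ^ pR := by
            rw [← ENNReal.rpow_mul, one_div, inv_mul_cancel₀ hpR0.ne', ENNReal.rpow_one]
        _ ≤ C ^ pR := ENNReal.rpow_le_rpow h1 hpR0.le
    have hCpR : C ^ pR ≠ ⊤ := ENNReal.rpow_ne_top_of_nonneg hpR0.le hCt.ne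
    have hkey : ∀ b : ℝ, 0 < b → b ≤ pR → ∀ M : ℝ, 0 < M → ∀ n, ∀ E : Set (ES (d + 1)),
        E ⊆ {ω | M < ‖f n ω‖} →
        ∫⁻ ω, (‖E.indicator (f n) ω‖₊ : ℝ≥0∞) ^ b ∂(sphM d) ≤
          ENNReal.ofReal (M ^ (b - pR)) * C ^ pR := by
      intro b hb hbp M hM n E hE
      have hpt : ∀ ω, (‖E.indicator (f n) ω‖₊ : ℝ≥0∞) ^ b ≤
          ENNReal.ofReal (M ^ (b - pR)) * (‖f n ω‖₊ : ℝ≥0∞) ^ pR := by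
        intro ω
        by_cases hω : ω ∈ E
        · have hMf : M < ‖f n ω‖ := hE hω
          set x : ℝ≥0∞ := (‖f n ω‖₊ : ℝ≥0∞) with hxdef
          have hx0 : x ≠ 0 := by
            simp only [hxdef, ne_eq, ENNReal.coe_eq_zero, nnnorm_eq_zero]
            intro h; rw [h] at hMf; simp at hMf; linarith
          have hxt : x ≠ ⊤ := ENNReal.coe_ne_top
          have hMx : ENNReal.ofReal M ≤ x := by
            rw [hxdef, ← enorm_eq_nnnorm, ← ofReal_norm]
            exact ENNReal.ofReal_le_ofReal hMf.le
          have hneg : x ^ (b - pR) ≤ ENNReal.ofReal (M ^ (b - pR)) := by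
            have h1 : x ^ (b - pR) = (x ^ (pR - b))⁻¹ := by
              rw [show b - pR = -(pR - b) by ring, ENNReal.rpow_neg]
            have h2 : (ENNReal.ofReal M) ^ (b - pR) = ((ENNReal.ofReal M) ^ (pR - b))⁻¹ := by
              rw [show b - pR = -(pR - b) by ring, ENNReal.rpow_neg]
            rw [h1, ← ENNReal.ofReal_rpow_of_pos hM, h2]
            exact ENNReal.inv_le_inv.2 (ENNReal.rpow_le_rpow hMx (by linarith))
          rw [Set.indicator_of_mem hω]
          calc x ^ b = x ^ (b - pR) * x ^ pR := by
                rw [← ENNReal.rpow_add _ _ hx0 hxt]; ring_nf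
            _ ≤ ENNReal.ofReal (M ^ (b - pR)) * x ^ pR :=
                mul_le_mul_left hneg _
        · rw [Set.indicator_of_notMem hω]
          simp [ENNReal.zero_rpow_of_pos hb]
      calc ∫⁻ ω, (‖E.indicator (f n) ω‖₊ : ℝ≥0∞) ^ b ∂(sphM d)
          ≤ ∫⁻ ω, ENNReal.ofReal (M ^ (b - pR)) * (‖f n ω‖₊ : ℝ≥0∞) ^ pR ∂(sphM d) :=
            lintegral_mono hpt
        _ = ENNReal.ofReal (M ^ (b - pR)) * ∫⁻ ω, (‖f n ω‖₊ : ℝ≥0∞) ^ pR ∂(sphM d) :=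
            lintegral_const_mul' _ _ ENNReal.ofReal_ne_top
        _ ≤ ENNReal.ofReal (M ^ (b - pR)) * C ^ pR := mul_le_mul_right (hIf n) _
    -- the final bound and the squeeze
    set S := Spq d r q with hSdef
    set Kc : ℝ≥0∞ := S * (C ^ pR) ^ (1 / rR) with hKcdef
    have hKct : Kc ≠ ⊤ :=
      ENNReal.mul_ne_top hS.ne (ENNReal.rpow_ne_top_of_nonneg (by positivity) hCpR)
    set e' : ℝ := (rR - pR) / rR with he'def
    have he'neg : 0 < -e' := by
      have heq : -e' = (pR - rR) / rR := by rw [he'def]; ring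
      rw [heq]
      exact div_pos (by linarith) hrR0
    have hupper : ∀ᶠ M : ℝ in atTop,
        (⨆ n, ⨆ (E : Set (ES (d + 1)))
          (_ : MeasurableSet E ∧ E ⊆ {ω | M < ‖f n ω‖}),
          eLpNorm (sphExt d (E.indicator (f n))) q volume) ≤
        ENNReal.ofReal (M ^ e') * Kc := by
      filter_upwards [eventually_gt_atTop (0 : ℝ)] with M hM
      refine iSup_le fun n => iSup_le fun E => iSup_le fun hE => ?_
      obtain ⟨hEm, hEs⟩ := hE
      set g : ES (d + 1) → ℂ := E.indicator (f n) with hgdef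
      have hgsm : AEStronglyMeasurable g (sphM d) := (hfmem n).1.indicator hEm
      have hgr : eLpNorm g r (sphM d) ≤
          (ENNReal.ofReal (M ^ (rR - pR)) * C ^ pR) ^ (1 / rR) := by
        rw [eLpNorm_eq_lintegral_rpow_enorm_toReal hr0 hrtop, ← hrRdef]
        exact ENNReal.rpow_le_rpow (hkey rR hrR0 hrRpR.le M hM n E hEs) (by positivity)
      have hgtop : (ENNReal.ofReal (M ^ (rR - pR)) * C ^ pR) ^ (1 / rR) ≠ ⊤ :=
        ENNReal.rpow_ne_top_of_nonneg (by positivity)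
          (ENNReal.mul_ne_top ENNReal.ofReal_ne_top hCpR)
      have hgmem : MemLp g r (sphM d) :=
        ⟨hgsm, lt_of_le_of_lt hgr (lt_top_iff_ne_top.2 hgtop)⟩
      have hgint : Integrable g (sphM d) := by
        refine ⟨hgsm, ?_⟩
        have h1 := hkey 1 one_pos hpR1.le M hM n E hEs
        simp only [ENNReal.rpow_one] at h1
        exact lt_of_le_of_lt h1 (lt_top_iff_ne_top.2
          (ENNReal.mul_ne_top ENNReal.ofReal_ne_top hCpR))
      calc eLpNorm (sphExt d g) q volume ≤ S * eLpNorm g r (sphM d) :=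
            extBound hr0 hgmem hgint
        _ ≤ S * (ENNReal.ofReal (M ^ (rR - pR)) * C ^ pR) ^ (1 / rR) :=
            mul_le_mul_right hgr _
        _ = ENNReal.ofReal (M ^ e') * Kc := by
            rw [ENNReal.mul_rpow_of_nonneg _ _ (by positivity : (0:ℝ) ≤ 1 / rR),
              ENNReal.ofReal_rpow_of_pos (by positivity), ← Real.rpow_mul hM.le,
              hKcdef, he'def]
            ring_nf
    have hG : Tendsto (fun M : ℝ => ENNReal.ofReal (M ^ e') * Kc) atTop (𝓝 0) := by
      have h1 : Tendsto (fun M : ℝ => ENNReal.ofReal (M ^ e')) atTop (𝓝 0) := by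
        have h2 : Tendsto (fun M : ℝ => M ^ e') atTop (𝓝 0) := by
          have := tendsto_rpow_neg_atTop he'neg
          simpa using this
        simpa using ENNReal.tendsto_ofReal h2
      simpa using ENNReal.Tendsto.mul_const h1 (Or.inr hKct)
    exact tendsto_of_tendsto_of_tendsto_of_le_of_le' tendsto_const_nhds hG
      (Eventually.of_forall fun _ => zero_le) hupper

end
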